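/- Let E be a real inner product space and let x, y, z ∈ E. Write a = dist(y,z), b = dist(x,z), c = dist(x,y), d_max = max(a, max(b,c)) and s = (a+b+c)/2. If a² + b² + c² > 2·d_max², then the infimum over w ∈ E of max(dist(x,w), max(dist(y,w), dist(z,w))) equals the circumradius a·b·c / (4·√(s·(s−a)·(s−b)·(s−c))). -/

import Mathlib

open InnerProductSpace

private lemma sq_combo14 {E : Type*} [NormedAddCommGroup E] [InnerProductSpace ℝ E]
    (u v : E) (p q : ℝ) :
    ‖p • u + q • v‖ ^ 2 = p ^ 2 * ‖u‖ ^ 2 + 2 * p * q * ⟪u, v⟫_ℝ + q ^ 2 * ‖v‖ ^ 2 := by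
  rw [norm_add_sq_real, real_inner_smul_left, real_inner_smul_right, norm_smul, norm_smul]
  simp only [Real.norm_eq_abs, mul_pow, sq_abs]
  ring

private lemma eq_of_sq_eq14 {a b : ℝ} (ha : 0 ≤ a) (hb : 0 ≤ b) (h : a ^ 2 = b ^ 2) :
    a = b := by nlinarith

set_option maxHeartbeats 1000000 in
/-- For an acute triangle in a real inner product space, the smallest enclosing
ball radius is the circumradius, given by the Heron-type formula. -/
theorem stmt14 {E : Type*} [NormedAddCommGroup E] [InnerProductSpace ℝ E]
    (x y z : E)
    (h : 2 * max (dist y z) (max (dist x z) (dist x y)) ^ 2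
        < dist y z ^ 2 + dist x z ^ 2 + dist x y ^ 2)
    (s : ℝ) (hs : s = (dist y z + dist x z + dist x y) / 2) :
    (⨅ w : E, max (dist x w) (max (dist y w) (dist z w)))
      = dist y z * dist x z * dist x y /
        (4 * Real.sqrt (s * (s - dist y z) * (s - dist x z) * (s - dist x y))) := by
  set a := dist y z with hadef
  set b := dist x z with hbdef
  set c := dist x y with hcdef
  set u := y - x with hudef
  set v := z - x with hvdef
  set t : ℝ := ⟪u, v⟫_ℝ with htdef
  have hC : ‖u‖ = c := by rw [hudef, hcdef, dist_eq_norm, norm_sub_rev]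
  have hB : ‖v‖ = b := by rw [hvdef, hbdef, dist_eq_norm, norm_sub_rev]
  have ha2 : a ^ 2 = b ^ 2 + c ^ 2 - 2 * t := by
    have h1 : a = ‖u - v‖ := by
      rw [hadef, dist_eq_norm]; congr 1; rw [hudef, hvdef]; abel
    rw [h1, norm_sub_sq_real, hC, hB, ← htdef]; ring
  -- acuteness consequences
  have hmaxa : a ≤ max a (max b c) := le_max_left _ _
  have hmaxb : b ≤ max a (max b c) := le_trans (le_max_left _ _) (le_max_right _ _)
  have hmaxc : c ≤ max a (max b c) := le_trans (le_max_right _ _) (le_max_right _ _)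
  have ha0 : 0 ≤ a := dist_nonneg
  have hb0 : 0 ≤ b := dist_nonneg
  have hc0 : 0 ≤ c := dist_nonneg
  have hM0 : 0 ≤ max a (max b c) := le_trans ha0 hmaxa
  have hA : 2 * a ^ 2 < a ^ 2 + b ^ 2 + c ^ 2 := by
    have := pow_le_pow_left₀ ha0 hmaxa 2; linarith
  have hBB : 2 * b ^ 2 < a ^ 2 + b ^ 2 + c ^ 2 := by
    have := pow_le_pow_left₀ hb0 hmaxb 2; linarith
  have hCC : 2 * c ^ 2 < a ^ 2 + b ^ 2 + c ^ 2 := by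
    have := pow_le_pow_left₀ hc0 hmaxc 2; linarith
  have ht : 0 < t := by linarith
  have htb : t < b ^ 2 := by linarith
  have htc : t < c ^ 2 := by linarith
  have hbpos : 0 < b := by nlinarith [htb, ht, hb0]
  have hcpos : 0 < c := by nlinarith [htc, ht, hc0]
  have ha2pos : 0 < a ^ 2 := by linarith
  have hapos : 0 < a := by nlinarith [ha2pos, ha0]
  have hD : 0 < b ^ 2 * c ^ 2 - t ^ 2 := by nlinarith [htb, htc, ht]
  set Δ : ℝ := b ^ 2 * c ^ 2 - t ^ 2 with hDdef
  set α : ℝ := b ^ 2 * (c ^ 2 - t) / (2 * Δ) with hαdef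
  set β : ℝ := c ^ 2 * (b ^ 2 - t) / (2 * Δ) with hβdef
  set w0 : E := x + α • u + β • v with hw0def
  set R : ℝ := a * b * c / (2 * Real.sqrt Δ) with hRdef
  have hsqrtΔ : 0 < Real.sqrt Δ := Real.sqrt_pos.2 hD
  have hR0 : 0 ≤ R := by
    rw [hRdef]
    exact div_nonneg (mul_nonneg (mul_nonneg ha0 hb0) hc0) (by positivity)
  have hR2 : R ^ 2 = a ^ 2 * (b ^ 2 * c ^ 2) / (4 * Δ) := by
    rw [hRdef, div_pow, mul_pow, mul_pow, mul_pow, Real.sq_sqrt hD.le]; ring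
  have hΔne : Δ ≠ 0 := ne_of_gt hD
  have hΔne' : b ^ 2 * c ^ 2 - t ^ 2 ≠ 0 := hΔne
  -- distances from w0 to the vertices
  have hxw : dist x w0 = R := by
    apply eq_of_sq_eq14 dist_nonneg hR0
    have hh : x - w0 = (-α) • u + (-β) • v := by
      rw [hw0def]; module
    rw [dist_eq_norm, hh, sq_combo14, hC, hB, ← htdef, hR2, ha2, hαdef, hβdef, hDdef]
    field_simp
    ring
  have hyw : dist y w0 = R := by
    apply eq_of_sq_eq14 dist_nonneg hR0
    have hh : y - w0 = (1 - α) • u + (-β) • v := by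
      rw [hw0def, hudef]; module
    rw [dist_eq_norm, hh, sq_combo14, hC, hB, ← htdef, hR2, ha2, hαdef, hβdef, hDdef]
    field_simp
    ring
  have hzw : dist z w0 = R := by
    apply eq_of_sq_eq14 dist_nonneg hR0
    have hh : z - w0 = (-α) • u + (1 - β) • v := by
      rw [hw0def, hvdef]; module
    rw [dist_eq_norm, hh, sq_combo14, hC, hB, ← htdef, hR2, ha2, hαdef, hβdef, hDdef]
    field_simp
    ring
  -- positivity of barycentric coordinates
  have hαpos : 0 < α := by
    rw [hαdef]
    exact div_pos (by nlinarith [htc, htb, ht]) (by linarith)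
  have hβpos : 0 < β := by
    rw [hβdef]
    exact div_pos (by nlinarith [htc, htb, ht]) (by linarith)
  have hγ : 1 - α - β = t * (b ^ 2 + c ^ 2 - 2 * t) / (2 * Δ) := by
    rw [hαdef, hβdef, hDdef]
    field_simp
    ring
  have hγpos : 0 < 1 - α - β := by
    rw [hγ]
    have h2 : 0 < b ^ 2 + c ^ 2 - 2 * t := by linarith
    exact div_pos (mul_pos ht h2) (by linarith)
  -- the circumcenter is a convex combination of the vertices
  have hzero : (1 - α - β) • (x - w0) + α • (y - w0) + β • (z - w0) = 0 := by
    rw [hw0def, hudef, hvdef]; module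
  -- lower bound
  have hkey : ∀ w : E, R ≤ max (dist x w) (max (dist y w) (dist z w)) := by
    intro w
    set d : E := w0 - w with hddef
    have hsum : (1 - α - β) * ⟪x - w0, d⟫_ℝ + α * ⟪y - w0, d⟫_ℝ + β * ⟪z - w0, d⟫_ℝ = 0 := by
      have hcongr := congrArg (fun p : E => ⟪p, d⟫_ℝ) hzero
      simpa [inner_add_left, real_inner_smul_left] using hcongr
    have hcases : 0 ≤ ⟪x - w0, d⟫_ℝ ∨ 0 ≤ ⟪y - w0, d⟫_ℝ ∨ 0 ≤ ⟪z - w0, d⟫_ℝ := by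
      by_contra hcon
      push_neg at hcon
      obtain ⟨h1, h2, h3⟩ := hcon
      linarith [mul_neg_of_pos_of_neg hγpos h1, mul_neg_of_pos_of_neg hαpos h2,
        mul_neg_of_pos_of_neg hβpos h3]
    have hexp : ∀ p : E, dist p w ^ 2 = dist p w0 ^ 2 + 2 * ⟪p - w0, d⟫_ℝ + ‖d‖ ^ 2 := by
      intro p
      rw [dist_eq_norm, dist_eq_norm, show p - w = (p - w0) + d by rw [hddef]; abel,
        norm_add_sq_real]
    rcases hcases with hc1 | hc1 | hc1
    · refine le_trans ?_ (le_max_left _ _)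
      have hsq2 : R ^ 2 ≤ dist x w ^ 2 := by
        have hthis := hexp x
        rw [hxw] at hthis
        rw [hthis]
        have := sq_nonneg ‖d‖
        linarith
      exact le_of_pow_le_pow_left₀ two_ne_zero dist_nonneg hsq2
    · refine le_trans ?_ (le_trans (le_max_left _ _) (le_max_right _ _))
      have hsq2 : R ^ 2 ≤ dist y w ^ 2 := by
        have hthis := hexp y
        rw [hyw] at hthis
        rw [hthis]
        have := sq_nonneg ‖d‖
        linarith
      exact le_of_pow_le_pow_left₀ two_ne_zero dist_nonneg hsq2
    · refine le_trans ?_ (le_trans (le_max_right _ _) (le_max_right _ _))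
      have hsq2 : R ^ 2 ≤ dist z w ^ 2 := by
        have hthis := hexp z
        rw [hzw] at hthis
        rw [hthis]
        have := sq_nonneg ‖d‖
        linarith
      exact le_of_pow_le_pow_left₀ two_ne_zero dist_nonneg hsq2
  -- compute the infimum
  have hbdd : BddBelow (Set.range fun w : E => max (dist x w) (max (dist y w) (dist z w))) := by
    refine ⟨R, ?_⟩
    rintro r ⟨w, rfl⟩
    exact hkey w
  have hinf : (⨅ w : E, max (dist x w) (max (dist y w) (dist z w))) = R := by
    refine le_antisymm ?_ (le_ciInf hkey)
    refine le_trans (ciInf_le hbdd w0) ?_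
    rw [hxw, hyw, hzw, max_self, max_self]
  rw [hinf]
  -- identify R with the Heron formula
  have hHeron : s * (s - a) * (s - b) * (s - c) = Δ / 4 := by
    subst hs
    rw [hDdef]
    linear_combination ((2 * t + b ^ 2 + c ^ 2 - a ^ 2) / 16) * ha2
  have hsq : Real.sqrt (s * (s - a) * (s - b) * (s - c)) = Real.sqrt Δ / 2 := by
    rw [hHeron, show Δ / 4 = Δ * (1 / 2) ^ 2 by ring, Real.sqrt_mul hD.le,
      Real.sqrt_sq (by norm_num : (0:ℝ) ≤ 1 / 2)]
    ring
  rw [hsq, hRdef]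
  rw [show (4:ℝ) * (Real.sqrt Δ / 2) = 2 * Real.sqrt Δ by ring]
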